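/- Let δ ∈ (0,1], let γ ≥ 0 be real, and let m be an integer with m ≥ 450/δ^2. Let E be a set of 2-element subsets of {1,…,3m} with |E| ≥ (δ/3) · C(3m,2), and let W ⊆ {1,…,3m} with |W| ≤ 3γm. Then |K12(E) \ tm(W)| ≥ (δ^2/10 − 3γ) · (3m)^3. -/

import Mathlib

/-- `K12(E')`: the triples `(u,v,w) ∈ {1,…,3m}³` with `v ≠ w`, `{u,v} ∈ E'` and
`{u,w} ∈ E'`. -/
def K12 (m : ℕ) (E : Finset (Finset (Fin (3 * m)))) :
    Finset (Fin (3 * m) × Fin (3 * m) × Fin (3 * m)) :=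
  Finset.univ.filter fun t =>
    t.2.1 ≠ t.2.2 ∧ ({t.1, t.2.1} : Finset (Fin (3 * m))) ∈ E ∧
      ({t.1, t.2.2} : Finset (Fin (3 * m))) ∈ E

/-- `tm(W)`: the triples `(u,v,w) ∈ {1,…,3m}³` with `{u,v,w} ∩ W ≠ ∅`. -/
def tmSet (m : ℕ) (W : Finset (Fin (3 * m))) :
    Finset (Fin (3 * m) × Fin (3 * m) × Fin (3 * m)) :=
  Finset.univ.filter fun t => ({t.1, t.2.1, t.2.2} : Finset (Fin (3 * m))) ∩ W ≠ ∅


/-- auxiliary: the degree function. -/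
def nbhd (m : ℕ) (E : Finset (Finset (Fin (3 * m)))) (u : Fin (3 * m)) :
    Finset (Fin (3 * m)) :=
  Finset.univ.filter fun v => ({u, v} : Finset (Fin (3 * m))) ∈ E

lemma nbhd_ne (m : ℕ) (E : Finset (Finset (Fin (3 * m))))
    (hE2 : ∀ e ∈ E, e.card = 2) (u v : Fin (3 * m)) (hv : v ∈ nbhd m E u) : v ≠ u := by
  intro hvu
  simp only [nbhd, Finset.mem_filter] at hv
  have := hE2 _ hv.2
  rw [hvu] at this
  simp at this

lemma K12_card (m : ℕ) (E : Finset (Finset (Fin (3 * m)))) :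
    (K12 m E).card = ∑ u : Fin (3 * m), (nbhd m E u).offDiag.card := by
  rw [Finset.card_eq_sum_card_fiberwise (f := Prod.fst) (t := Finset.univ)
    (fun x _ => Finset.mem_univ _)]
  refine Finset.sum_congr rfl fun u _ => ?_
  refine Finset.card_nbij' (i := fun t => (t.2.1, t.2.2)) (j := fun p => (u, p.1, p.2))
    ?_ ?_ ?_ ?_
  · intro t ht
    simp only [Finset.mem_coe, K12, Finset.mem_filter, Finset.mem_univ, true_and] at ht
    obtain ⟨⟨h1, h2, h3⟩, h4⟩ := ht
    subst h4
    simp only [Finset.mem_coe, Finset.mem_offDiag, nbhd, Finset.mem_filter, Finset.mem_univ, true_and]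
    exact ⟨h2, h3, h1⟩
  · intro p hp
    simp only [Finset.mem_coe, Finset.mem_offDiag, nbhd, Finset.mem_filter, Finset.mem_univ, true_and] at hp
    simp only [Finset.mem_coe, K12, Finset.mem_filter, Finset.mem_univ, true_and]
    exact ⟨⟨hp.2.2, hp.1, hp.2.1⟩, trivial⟩
  · intro t ht
    simp only [Finset.mem_coe, K12, Finset.mem_filter] at ht
    obtain ⟨-, h4⟩ := ht
    subst h4
    rfl
  · intro p _; rfl

lemma nbhd_card (m : ℕ) (E : Finset (Finset (Fin (3 * m))))
    (hE2 : ∀ e ∈ E, e.card = 2) (u : Fin (3 * m)) :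
    (nbhd m E u).card = (E.filter fun e => u ∈ e).card := by
  refine Finset.card_bij (fun v _ => ({u, v} : Finset (Fin (3 * m)))) ?_ ?_ ?_
  · intro v hv
    simp only [nbhd, Finset.mem_filter, Finset.mem_univ, true_and] at hv ⊢
    exact ⟨hv, Finset.mem_insert_self u _⟩
  · intro v hv v' hv' h
    have hvu := nbhd_ne m E hE2 u v hv
    have hv'u := nbhd_ne m E hE2 u v' hv'
    have h' : ({u, v} : Finset (Fin (3 * m))) = ({u, v'} : Finset (Fin (3 * m))) := h
    have : v' ∈ ({u, v} : Finset (Fin (3 * m))) := by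
      rw [h']; exact Finset.mem_insert_of_mem (Finset.mem_singleton_self v')
    rcases Finset.mem_insert.1 this with h'' | h''
    · exact absurd h'' hv'u
    · exact (Finset.mem_singleton.1 h'').symm
  · intro e he
    simp only [Finset.mem_filter] at he
    obtain ⟨heE, hue⟩ := he
    obtain ⟨a, b, hab, rfl⟩ := Finset.card_eq_two.1 (hE2 _ heE)
    rcases Finset.mem_insert.1 hue with h' | h'
    · refine ⟨b, ?_, ?_⟩
      · simp only [nbhd, Finset.mem_filter, Finset.mem_univ, true_and]
        rw [h']; exact heE
      · show ({u, b} : Finset (Fin (3 * m))) = {a, b}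
        rw [h']
    · rw [Finset.mem_singleton] at h'
      refine ⟨a, ?_, ?_⟩
      · simp only [nbhd, Finset.mem_filter, Finset.mem_univ, true_and]
        rw [h']; exact (Finset.pair_comm a b ▸ heE)
      · show ({u, a} : Finset (Fin (3 * m))) = {a, b}
        rw [h']; exact Finset.pair_comm b a

lemma deg_sum (m : ℕ) (E : Finset (Finset (Fin (3 * m))))
    (hE2 : ∀ e ∈ E, e.card = 2) :
    ∑ u : Fin (3 * m), (nbhd m E u).card = 2 * E.card := by
  have h : ∀ u : Fin (3 * m), (nbhd m E u).card = (E.filter fun e => u ∈ e).card :=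
    nbhd_card m E hE2
  simp_rw [h, Finset.card_filter]
  rw [Finset.sum_comm]
  rw [Finset.sum_congr rfl (fun e he => ?_)]
  · rw [Finset.sum_const, smul_eq_mul, mul_comm]
  · rw [Finset.sum_ite_mem, Finset.univ_inter, Finset.sum_const, smul_eq_mul, mul_one,
      hE2 e he]

lemma tmSet_card (m : ℕ) (W : Finset (Fin (3 * m))) :
    (tmSet m W).card ≤ 3 * (W.card * ((3 * m) * (3 * m))) := by
  classical
  set A := (Finset.univ : Finset (Fin (3*m) × Fin (3*m) × Fin (3*m))).filter
    (fun t => t.1 ∈ W) with hA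
  set B := (Finset.univ : Finset (Fin (3*m) × Fin (3*m) × Fin (3*m))).filter
    (fun t => t.2.1 ∈ W) with hB
  set C := (Finset.univ : Finset (Fin (3*m) × Fin (3*m) × Fin (3*m))).filter
    (fun t => t.2.2 ∈ W) with hC
  have hsub : tmSet m W ⊆ A ∪ B ∪ C := by
    intro t ht
    simp only [tmSet, Finset.mem_filter, Finset.mem_univ, true_and,
      ← Finset.nonempty_iff_ne_empty] at ht
    obtain ⟨x, hx⟩ := ht
    rw [Finset.mem_inter] at hx
    obtain ⟨hx1, hx2⟩ := hx
    simp only [Finset.mem_insert, Finset.mem_singleton] at hx1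
    simp only [Finset.mem_union, hA, hB, hC, Finset.mem_filter, Finset.mem_univ, true_and]
    rcases hx1 with h | h | h
    · exact Or.inl (Or.inl (h ▸ hx2))
    · exact Or.inl (Or.inr (h ▸ hx2))
    · exact Or.inr (h ▸ hx2)
  have cA : A.card = W.card * ((3*m) * (3*m)) := by
    have h : A = W ×ˢ ((Finset.univ : Finset (Fin (3*m))) ×ˢ
        (Finset.univ : Finset (Fin (3*m)))) := by
      ext t
      simp [hA, Finset.mem_product]
    rw [h, Finset.card_product, Finset.card_product, Finset.card_univ, Fintype.card_fin]
  have cB : B.card = (3*m) * (W.card * (3*m)) := by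
    have h : B = (Finset.univ : Finset (Fin (3*m))) ×ˢ
        (W ×ˢ (Finset.univ : Finset (Fin (3*m)))) := by
      ext t
      simp [hB, Finset.mem_product]
    rw [h, Finset.card_product, Finset.card_product, Finset.card_univ, Fintype.card_fin]
  have cC : C.card = (3*m) * ((3*m) * W.card) := by
    have h : C = (Finset.univ : Finset (Fin (3*m))) ×ˢ
        ((Finset.univ : Finset (Fin (3*m))) ×ˢ W) := by
      ext t
      simp [hC, Finset.mem_product]
    rw [h, Finset.card_product, Finset.card_product, Finset.card_univ, Fintype.card_fin]
  calc (tmSet m W).card ≤ (A ∪ B ∪ C).card := Finset.card_le_card hsub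
    _ ≤ (A ∪ B).card + C.card := Finset.card_union_le _ _
    _ ≤ A.card + B.card + C.card := Nat.add_le_add_right (Finset.card_union_le _ _) _
    _ = 3 * (W.card * ((3 * m) * (3 * m))) := by rw [cA, cB, cC]; ring


lemma two_E_le (m : ℕ) (E : Finset (Finset (Fin (3 * m))))
    (hE2 : ∀ e ∈ E, e.card = 2) : 2 * E.card ≤ (3 * m) * (3 * m) := by
  rw [← deg_sum m E hE2]
  calc ∑ u : Fin (3 * m), (nbhd m E u).card ≤ ∑ _u : Fin (3 * m), (3 * m) :=
        Finset.sum_le_sum fun u _ =>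
          (Finset.card_filter_le _ _).trans_eq (by rw [Finset.card_univ, Fintype.card_fin])
    _ = (3 * m) * (3 * m) := by rw [Finset.sum_const, Finset.card_univ, Fintype.card_fin,
          smul_eq_mul]

lemma K12_lb (m : ℕ) (E : Finset (Finset (Fin (3 * m))))
    (hE2 : ∀ e ∈ E, e.card = 2) (hm0 : 0 < m) :
    ((2 * E.card : ℕ) : ℝ) ^ 2 / (3 * m) - ((2 * E.card : ℕ) : ℝ)
      ≤ ((K12 m E).card : ℝ) := by
  set d : Fin (3*m) → ℕ := fun u => (nbhd m E u).card with hd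
  have hM0 : (0:ℝ) < (m:ℝ) := by exact_mod_cast hm0
  have hSnat : ((2 * E.card : ℕ) : ℝ) = ∑ u : Fin (3*m), (d u : ℝ) := by
    rw [← deg_sum m E hE2]; push_cast; rfl
  have hCS : (∑ u : Fin (3*m), (d u : ℝ)) ^ 2 ≤ 3 * (m:ℝ) * ∑ u : Fin (3*m), (d u : ℝ) ^ 2 := by
    have h := sq_sum_le_card_mul_sum_sq (s := (Finset.univ : Finset (Fin (3*m))))
      (f := fun u => (d u : ℝ))
    rw [Finset.card_univ, Fintype.card_fin] at h
    push_cast at h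
    linarith [h]
  have h1 : ((K12 m E).card : ℝ)
      = (∑ u : Fin (3*m), (d u : ℝ) ^ 2) - ∑ u : Fin (3*m), (d u : ℝ) := by
    rw [K12_card m E]
    push_cast
    rw [← Finset.sum_sub_distrib]
    refine Finset.sum_congr rfl fun u _ => ?_
    rw [Finset.offDiag_card]
    have hle : d u ≤ d u * d u := by
      rcases Nat.eq_zero_or_pos (d u) with h | h
      · simp [h]
      · exact Nat.le_mul_of_pos_left _ h
    rw [Nat.cast_sub hle]; push_cast; ring
  rw [hSnat, h1]
  have h2 : (∑ u : Fin (3*m), (d u : ℝ)) ^ 2 / (3 * m) ≤ ∑ u : Fin (3*m), (d u : ℝ) ^ 2 := by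
    rw [div_le_iff₀ (by positivity)]
    calc (∑ u : Fin (3*m), (d u : ℝ)) ^ 2 ≤ 3 * (m:ℝ) * ∑ u : Fin (3*m), (d u : ℝ) ^ 2 := hCS
      _ = (∑ u : Fin (3*m), (d u : ℝ) ^ 2) * (3 * m) := by ring
  linarith

lemma arith_final (δ γ M S K T D : ℝ) (hδ0 : 0 < δ) (hδ1 : δ ≤ 1) (hγ : 0 ≤ γ)
    (h450 : (450 : ℝ) ≤ δ ^ 2 * M) (hM450 : (450 : ℝ) ≤ M)
    (hSlb : δ * M * (3 * M - 1) ≤ S) (hSub : S ≤ 9 * M ^ 2)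
    (hK : S ^ 2 / (3 * M) - S ≤ K) (hT : T ≤ 81 * γ * M ^ 3)
    (hsd : K - T ≤ D) :
    (δ ^ 2 / 10 - 3 * γ) * (3 * M) ^ 3 ≤ D := by
  have hM0 : (0:ℝ) < M := by linarith
  have hδ2 : (0:ℝ) < δ ^ 2 := by positivity
  have hδsq1 : δ ^ 2 ≤ 1 := by nlinarith
  have hS2 : δ ^ 2 * M * (3 * M - 1) ^ 2 / 3 ≤ S ^ 2 / (3 * M) := by
    rw [div_le_div_iff₀ (by norm_num) (by positivity)]
    have h0 : (0:ℝ) ≤ δ * M * (3 * M - 1) := by nlinarith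
    nlinarith [mul_self_le_mul_self h0 hSlb]
  have key : (δ ^ 2 / 10 - 3 * γ) * (3 * M) ^ 3
      ≤ δ ^ 2 * M * (3 * M - 1) ^ 2 / 3 - 9 * M ^ 2 - 81 * γ * M ^ 3 := by
    nlinarith [mul_le_mul_of_nonneg_right h450 (sq_nonneg M),
      mul_le_mul_of_nonneg_right hδsq1 (sq_nonneg M),
      mul_nonneg hδ2.le hM0.le, sq_nonneg M]
  calc (δ ^ 2 / 10 - 3 * γ) * (3 * M) ^ 3
      ≤ δ ^ 2 * M * (3 * M - 1) ^ 2 / 3 - 9 * M ^ 2 - 81 * γ * M ^ 3 := key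
    _ ≤ S ^ 2 / (3 * M) - S - T := by linarith
    _ ≤ K - T := by linarith
    _ ≤ D := hsd

/-- Let `δ ∈ (0,1]`, `γ ≥ 0`, and `m ≥ 450/δ²` an integer.  Let `E` be a set
of 2-element subsets of `{1,…,3m}` with `|E| ≥ (δ/3)·C(3m,2)`, and `W ⊆ {1,…,3m}` with
`|W| ≤ 3γm`.  Then `|K12(E) \ tm(W)| ≥ (δ²/10 − 3γ)·(3m)³`. -/
theorem stmt8 (δ γ : ℝ) (hδ0 : 0 < δ) (hδ1 : δ ≤ 1) (hγ : 0 ≤ γ)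
    (m : ℕ) (hm : 450 / δ ^ 2 ≤ (m : ℝ))
    (E : Finset (Finset (Fin (3 * m)))) (hE2 : ∀ e ∈ E, e.card = 2)
    (hE : (δ / 3) * ((3 * m).choose 2 : ℝ) ≤ (E.card : ℝ))
    (W : Finset (Fin (3 * m))) (hW : (W.card : ℝ) ≤ 3 * γ * (m : ℝ)) :
    (δ ^ 2 / 10 - 3 * γ) * (3 * (m : ℝ)) ^ 3 ≤ ((K12 m E \ tmSet m W).card : ℝ) := by
  have hδ2 : (0:ℝ) < δ ^ 2 := by positivity
  have h450 : (450 : ℝ) ≤ δ ^ 2 * m := by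
    rw [div_le_iff₀ hδ2] at hm; linarith [hm]
  have hM450 : (450 : ℝ) ≤ (m : ℝ) := by nlinarith [sq_nonneg δ]
  have hM0 : (0:ℝ) < (m:ℝ) := by linarith
  have hm0 : 0 < m := by exact_mod_cast hM0
  set S : ℝ := ((2 * E.card : ℕ) : ℝ) with hS
  have hSlb : δ * (m:ℝ) * (3 * (m:ℝ) - 1) ≤ S := by
    rw [hS]
    have hchoose : ((3*m).choose 2 : ℝ) = (3*(m:ℝ)) * (3*(m:ℝ) - 1) / 2 := by
      rw [Nat.cast_choose_two]; push_cast; ring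
    rw [hchoose] at hE
    push_cast
    nlinarith [hE]
  have hSub : S ≤ 9 * (m:ℝ) ^ 2 := by
    rw [hS]
    have h := two_E_le m E hE2
    have h' : ((2 * E.card : ℕ) : ℝ) ≤ (((3*m) * (3*m) : ℕ) : ℝ) := by exact_mod_cast h
    calc ((2 * E.card : ℕ) : ℝ) ≤ (((3*m) * (3*m) : ℕ) : ℝ) := h'
      _ = 9 * (m:ℝ) ^ 2 := by push_cast; ring
  have hKlb : S ^ 2 / (3 * (m:ℝ)) - S ≤ ((K12 m E).card : ℝ) := K12_lb m E hE2 hm0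
  have hTW : ((tmSet m W).card : ℝ) ≤ 81 * γ * (m:ℝ) ^ 3 := by
    have h := tmSet_card m W
    have h' : ((tmSet m W).card : ℝ) ≤ ((3 * (W.card * ((3*m) * (3*m))) : ℕ) : ℝ) := by
      exact_mod_cast h
    have h'' : ((3 * (W.card * ((3*m) * (3*m))) : ℕ) : ℝ) = 27 * (m:ℝ)^2 * W.card := by
      push_cast; ring
    rw [h''] at h'
    calc ((tmSet m W).card : ℝ) ≤ 27 * (m:ℝ)^2 * W.card := h'
      _ ≤ 27 * (m:ℝ)^2 * (3 * γ * m) :=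
          mul_le_mul_of_nonneg_left hW (by positivity)
      _ = 81 * γ * (m:ℝ) ^ 3 := by ring
  have hsdiff : ((K12 m E).card : ℝ) - ((tmSet m W).card : ℝ)
      ≤ ((K12 m E \ tmSet m W).card : ℝ) := by
    have h := Finset.card_le_card_sdiff_add_card (s := K12 m E) (t := tmSet m W)
    have h' : ((K12 m E).card : ℝ)
        ≤ ((K12 m E \ tmSet m W).card : ℝ) + (tmSet m W).card := by exact_mod_cast h
    linarith
  exact arith_final δ γ (m:ℝ) S ((K12 m E).card : ℝ) ((tmSet m W).card : ℝ)
    ((K12 m E \ tmSet m W).card : ℝ) hδ0 hδ1 hγ h450 hM450 hSlb hSub hKlb hTW hsdiff
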